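/- Let S be a bilateral weighted shift with positive bounded weights. For every non-zero x ∈ H, the open annulus {λ ∈ ℂ : r₃⁻(S) < |λ| < r₂⁺(S)} is contained in σ_S(x), where r₃⁻(S) = limsup (1/β_{−n})^{1/n} and r₂⁺(S) = liminf β_n^{1/n}. -/

import Mathlib

open Filter

private lemma summable_of_eventually_le_geom {f : ℕ → ℝ} {r : ℝ} (hr0 : 0 ≤ r) (hr1 : r < 1)
    (hf0 : ∀ n, 0 ≤ f n) (h : ∀ᶠ n in atTop, f n ≤ r ^ n) : Summable f := by
  obtain ⟨N, hN⟩ := h.exists_forall_of_atTop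
  rw [← summable_nat_add_iff N]
  apply Summable.of_nonneg_of_le (fun n => hf0 _) (fun n => ?_)
    (summable_geometric_of_lt_one hr0 hr1)
  calc f (n + N) ≤ r ^ (n + N) := hN _ (by omega)
    _ ≤ r ^ n := pow_le_pow_of_le_one hr0 hr1.le (by omega)

private lemma root_le_of_le_pow {P : ℕ → ℝ} {M' : ℝ} (h1 : 1 ≤ M') (hP : ∀ n, 0 ≤ P n)
    (hPM : ∀ n, P n ≤ M' ^ n) : ∀ n, P n ^ ((n : ℝ)⁻¹) ≤ M' := by
  intro n
  rcases Nat.eq_zero_or_pos n with rfl | hn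
  · simpa using h1
  · calc P n ^ ((n:ℝ)⁻¹) ≤ (M' ^ n) ^ ((n:ℝ)⁻¹) :=
        Real.rpow_le_rpow (hP n) (hPM n) (by positivity)
      _ = M' := Real.pow_rpow_inv_natCast (by linarith) (by omega)

private lemma summable_pow_div_of_lt_liminf {P : ℕ → ℝ} (hP : ∀ n, 0 < P n) {s C : ℝ}
    (hs : 0 ≤ s) (hC : ∀ n, P n ^ ((n : ℝ)⁻¹) ≤ C)
    (h : s < atTop.liminf fun n : ℕ => P n ^ ((n : ℝ)⁻¹)) :
    Summable fun n : ℕ => s ^ n / P n := by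
  obtain ⟨t, hst, htl⟩ := exists_between h
  have ht0 : 0 < t := lt_of_le_of_lt hs hst
  have hev : ∀ᶠ n in atTop, t < P n ^ ((n : ℝ)⁻¹) :=
    Filter.eventually_lt_of_lt_liminf htl
      (Filter.isBoundedUnder_of ⟨0, fun n => Real.rpow_nonneg (hP n).le _⟩)
  apply summable_of_eventually_le_geom (r := s / t) (div_nonneg hs ht0.le)
    (by rw [div_lt_one ht0]; exact hst) (fun n => div_nonneg (pow_nonneg hs n) (hP n).le)
  filter_upwards [hev, Filter.eventually_ge_atTop 1] with n hn hn1
  have hPn : t ^ n ≤ P n := by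
    calc t ^ n ≤ (P n ^ ((n:ℝ)⁻¹)) ^ n := pow_le_pow_left₀ ht0.le hn.le n
      _ = P n := Real.rpow_inv_natCast_pow (hP n).le (by omega)
  rw [div_pow]
  exact div_le_div_of_nonneg_left (by positivity) (by positivity) hPn

private lemma summable_div_pow_of_limsup_lt {Q : ℕ → ℝ} (hQ : ∀ n, 0 < Q n) {s C : ℝ}
    (hC : ∀ n, Q n ^ ((n : ℝ)⁻¹) ≤ C)
    (hs : 0 < s)
    (h : (atTop.limsup fun n : ℕ => Q n ^ ((n : ℝ)⁻¹)) < s) :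
    Summable fun n : ℕ => Q n / s ^ n := by
  obtain ⟨t, hlt, hts⟩ := exists_between h
  have hbdd : Filter.IsBoundedUnder (· ≤ ·) atTop (fun n : ℕ => Q n ^ ((n : ℝ)⁻¹)) :=
    Filter.isBoundedUnder_of ⟨C, hC⟩
  have hev : ∀ᶠ n in atTop, Q n ^ ((n : ℝ)⁻¹) < t :=
    Filter.eventually_lt_of_limsup_lt hlt hbdd
  have hL0 : (0:ℝ) ≤ atTop.limsup fun n : ℕ => Q n ^ ((n : ℝ)⁻¹) :=
    Filter.le_limsup_of_frequently_le
      (Filter.Frequently.of_forall fun n => Real.rpow_nonneg (hQ n).le _) hbdd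
  have ht0 : 0 ≤ t := hL0.trans hlt.le
  apply summable_of_eventually_le_geom (r := t / s) (div_nonneg ht0 hs.le)
    (by rw [div_lt_one hs]; exact hts) (fun n => div_nonneg (hQ n).le (pow_nonneg hs.le n))
  filter_upwards [hev, Filter.eventually_ge_atTop 1] with n hn hn1
  have hQn : Q n ≤ t ^ n := by
    calc Q n = (Q n ^ ((n:ℝ)⁻¹)) ^ n := (Real.rpow_inv_natCast_pow (hQ n).le (by omega)).symm
      _ ≤ t ^ n := pow_le_pow_left₀ (Real.rpow_nonneg (hQ n).le _) hn.le n
  rw [div_pow]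
  gcongr

private lemma zpow_le_add {s l r : ℝ} (hl : 0 < l) (hls : l ≤ s) (hsr : s ≤ r) (n : ℤ) :
    s ^ n ≤ r ^ n + l ^ n := by
  have hs : 0 < s := hl.trans_le hls
  have hr : 0 < r := hs.trans_le hsr
  rcases le_or_gt 0 n with hn | hn
  · have h : s ^ n ≤ r ^ n := by
      obtain ⟨k, rfl⟩ := Int.eq_ofNat_of_zero_le hn
      rw [zpow_natCast, zpow_natCast]
      exact pow_le_pow_left₀ hs.le hsr k
    have h2 : (0:ℝ) ≤ l ^ n := (zpow_pos hl n).le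
    linarith
  · have h : s ^ n ≤ l ^ n := by
      have hk : n = -(((-n).toNat : ℕ) : ℤ) := by omega
      rw [hk, zpow_neg, zpow_neg, zpow_natCast, zpow_natCast]
      have := pow_le_pow_left₀ hl.le hls (-n).toNat
      exact inv_anti₀ (pow_pos hl _) this
    have h2 : (0:ℝ) ≤ r ^ n := (zpow_pos hr n).le
    linarith

private lemma sum_Icc_telescope {M : Type*} [AddCommGroup M] (F : ℤ → M) {a b : ℤ} (hab : a ≤ b) :
    ∑ n ∈ Finset.Icc a b, (F (n - 1) - F n) = F (a - 1) - F b := by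
  refine Int.le_induction
    (motive := fun b _ => ∑ n ∈ Finset.Icc a b, (F (n - 1) - F n) = F (a - 1) - F b) ?_ ?_ b hab
  · simp
  · intro n hn ih
    have h : Finset.Icc a (n + 1) = insert (n + 1) (Finset.Icc a n) := by
      ext k; simp only [Finset.mem_Icc, Finset.mem_insert]; omega
    rw [h, Finset.sum_insert (by simp), ih]
    have h2 : n + 1 - 1 = n := by ring
    rw [h2]
    abel

private lemma isPreconnected_annulus {L R : ℝ} (hL : 0 ≤ L) :
    IsPreconnected {z : ℂ | L < ‖z‖ ∧ ‖z‖ < R} := by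
  have himg : {z : ℂ | L < ‖z‖ ∧ ‖z‖ < R} =
      (fun p : ℝ × ℝ => (p.1 : ℂ) * Complex.exp (p.2 * Complex.I)) '' (Set.Ioo L R ×ˢ Set.univ) := by
    ext z
    constructor
    · rintro ⟨h1, h2⟩
      refine ⟨(‖z‖, z.arg), ⟨⟨?_, ?_⟩, trivial⟩, Complex.norm_mul_exp_arg_mul_I z⟩
      · simpa using h1
      · simpa using h2
    · rintro ⟨⟨r, θ⟩, ⟨⟨hr1, hr2⟩, -⟩, rfl⟩
      have : ‖(r : ℂ) * Complex.exp (θ * Complex.I)‖ = r := by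
        rw [norm_mul, Complex.norm_exp_ofReal_mul_I,
          mul_one, Complex.norm_real, Real.norm_eq_abs, _root_.abs_of_nonneg (hL.trans hr1.le)]
      exact ⟨by rw [this]; exact hr1, by rw [this]; exact hr2⟩
  rw [himg]
  exact ((isPreconnected_Ioo.prod isPreconnected_univ).image _
    (Continuous.continuousOn (by continuity)))

private lemma integral_exp_int (k : ℤ) (hk : k ≠ 0) :
    ∫ θ in (0:ℝ)..(2 * Real.pi), Complex.exp ((k : ℂ) * θ * Complex.I) = 0 := by
  have h : ∀ θ : ℝ, (k : ℂ) * θ * Complex.I = ((k : ℂ) * Complex.I) * θ := by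
    intro θ; ring
  simp_rw [h]
  rw [integral_exp_mul_complex (by simp [Complex.ext_iff, hk])]
  have h2 : Complex.exp ((k : ℂ) * Complex.I * ((2 * Real.pi : ℝ) : ℂ)) = 1 := by
    push_cast
    rw [show (k : ℂ) * Complex.I * (2 * Real.pi) = (k : ℂ) * (2 * Real.pi * Complex.I) by ring]
    exact Complex.exp_int_mul_two_pi_mul_I k
  rw [h2]
  simp

section Defs

variable {X : Type*} [NormedAddCommGroup X] [NormedSpace ℂ X]

/-- The local resolvent set of `T` at `x`. -/
def localResolventSet (T : X →L[ℂ] X) (x : X) : Set ℂ :=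
  {μ | ∃ U : Set ℂ, IsOpen U ∧ μ ∈ U ∧ ∃ f : ℂ → X, AnalyticOnNhd ℂ f U ∧
    ∀ z ∈ U, (T - z • (1 : X →L[ℂ] X)) (f z) = x}

/-- The local spectrum of `T` at `x`. -/
def localSpectrum (T : X →L[ℂ] X) (x : X) : Set ℂ :=
  (localResolventSet T x)ᶜ

end Defs

variable {H : Type*} [NormedAddCommGroup H] [InnerProductSpace ℂ H] [CompleteSpace H]

/-- For a bilateral weighted shift `S` with positive bounded weights and every non-zero
`x`, the open annulus `{λ : r₃⁻(S) < |λ| < r₂⁺(S)}` is contained in `σ_S(x)`, where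
`r₃⁻(S) = limsup (1/β₋ₙ)^(1/n)` and `r₂⁺(S) = liminf (βₙ)^(1/n)`. -/
theorem bilateral_annulus_subset_localSpectrum (S : H →L[ℂ] H)
    (e : HilbertBasis ℤ ℂ H) (ω : ℤ → ℝ) (hpos : ∀ n, 0 < ω n)
    (hbd : ∃ M : ℝ, ∀ n, ω n ≤ M)
    (hS : ∀ n, S (e n) = (ω n : ℂ) • e (n + 1))
    (x : H) (hx : x ≠ 0) (μ : ℂ)
    (h₁ : (atTop.limsup fun n : ℕ =>
        (∏ i ∈ Finset.range n, ω (-(i : ℤ) - 1)) ^ ((n : ℝ)⁻¹)) < ‖μ‖)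
    (h₂ : ‖μ‖ < atTop.liminf fun n : ℕ =>
        (∏ i ∈ Finset.range n, ω (i : ℤ)) ^ ((n : ℝ)⁻¹)) :
    μ ∈ localSpectrum S x := by
  classical
  obtain ⟨M, hM⟩ := hbd
  set P : ℕ → ℝ := fun n => ∏ i ∈ Finset.range n, ω (i : ℤ) with hPdef
  set Q : ℕ → ℝ := fun n => ∏ i ∈ Finset.range n, ω (-(i : ℤ) - 1) with hQdef
  have hPpos : ∀ n, 0 < P n := fun n => Finset.prod_pos fun i _ => hpos _
  have hQpos : ∀ n, 0 < Q n := fun n => Finset.prod_pos fun i _ => hpos _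
  have hM'1 : (1:ℝ) ≤ max M 1 := le_max_right _ _
  have hple : ∀ (f : ℕ → ℤ) (n : ℕ), (∏ i ∈ Finset.range n, ω (f i)) ≤ (max M 1) ^ n := by
    intro f n
    calc (∏ i ∈ Finset.range n, ω (f i)) ≤ ∏ _i ∈ Finset.range n, (max M 1) :=
          Finset.prod_le_prod (fun i _ => (hpos _).le) (fun i _ => (hM _).trans (le_max_left _ _))
      _ = (max M 1) ^ n := by rw [Finset.prod_const, Finset.card_range]
  have hPb : ∀ n, P n ^ ((n:ℝ)⁻¹) ≤ max M 1 :=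
    root_le_of_le_pow hM'1 (fun n => (hPpos n).le) (fun n => hple _ n)
  have hQb : ∀ n, Q n ^ ((n:ℝ)⁻¹) ≤ max M 1 :=
    root_le_of_le_pow hM'1 (fun n => (hQpos n).le) (fun n => hple _ n)
  set L := atTop.limsup fun n : ℕ => Q n ^ ((n:ℝ)⁻¹) with hLdef
  set R := atTop.liminf fun n : ℕ => P n ^ ((n:ℝ)⁻¹) with hRdef
  have h₁' : L < ‖μ‖ := h₁
  have h₂' : ‖μ‖ < R := h₂
  have hL0 : 0 ≤ L :=
    Filter.le_limsup_of_frequently_le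
      (Filter.Frequently.of_forall fun n => Real.rpow_nonneg (hQpos n).le _)
      (Filter.isBoundedUnder_of ⟨max M 1, hQb⟩)
  set A : Set ℂ := {z : ℂ | L < ‖z‖ ∧ ‖z‖ < R} with hAdef
  have hAopen : IsOpen A := by
    have h : A = (fun z : ℂ => ‖z‖) ⁻¹' (Set.Ioo L R) := rfl
    rw [h]
    exact isOpen_Ioo.preimage continuous_norm
  have hAne : ∀ z ∈ A, z ≠ 0 := by
    intro z hz h0
    rw [h0] at hz
    simp only [hAdef, Set.mem_setOf_eq, norm_zero] at hz
    exact absurd hz.1 (not_lt.mpr hL0)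
  set b : ℤ → ℝ := fun n => if 0 ≤ n then (P n.toNat)⁻¹ else Q (-n).toNat with hbdef
  have hbnat : ∀ k : ℕ, b (k:ℤ) = (P k)⁻¹ := by
    intro k; simp [hbdef]
  have hbneg : ∀ k : ℕ, b (-(k:ℤ)) = Q k := by
    intro k
    rcases Nat.eq_zero_or_pos k with rfl | hk
    · simp [hbdef, hPdef, hQdef]
    · have h : ¬ (0 ≤ -(k:ℤ)) := by omega
      simp [hbdef, h, hk.ne']
  have hbpos : ∀ n, 0 < b n := by
    intro n
    rw [hbdef]
    dsimp only
    split
    · exact inv_pos.mpr (hPpos _)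
    · exact hQpos _
  have hbrec : ∀ n : ℤ, b (n + 1) * ω n = b n := by
    intro n
    rcases le_or_gt 0 n with hn | hn
    · obtain ⟨k, rfl⟩ := Int.eq_ofNat_of_zero_le hn
      have h1 : ((k:ℤ) + 1) = ((k+1 : ℕ) : ℤ) := by push_cast; ring
      rw [h1, hbnat, hbnat]
      have h2 : P (k+1) = P k * ω k := Finset.prod_range_succ _ _
      rw [h2, mul_inv, mul_assoc, inv_mul_cancel₀ (hpos _).ne', mul_one]
    · obtain ⟨k, rfl⟩ : ∃ k : ℕ, n = -((k:ℤ)+1) := ⟨(-n-1).toNat, by omega⟩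
      have e1 : b (-((k:ℤ)+1) + 1) = Q k := by
        rw [show -((k:ℤ)+1) + 1 = -(k:ℤ) by ring, hbneg]
      have e2 : b (-((k:ℤ)+1)) = Q (k+1) := by
        rw [show -((k:ℤ)+1) = -((k+1:ℕ):ℤ) by push_cast; ring, hbneg]
      have h3 : Q (k+1) = Q k * ω (-(k:ℤ)-1) := Finset.prod_range_succ _ _
      rw [e1, e2, h3, show -((k:ℤ)+1) = -(k:ℤ)-1 by ring]
  set c : ℤ → ℂ := fun n => inner ℂ (e n) x with hcdef
  have hcb : ∀ n, ‖c n‖ ≤ ‖x‖ := by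
    intro n
    calc ‖c n‖ ≤ ‖e n‖ * ‖x‖ := norm_inner_le_norm _ _
      _ = ‖x‖ := by rw [e.orthonormal.1 n, one_mul]
  set d : ℤ → ℂ := fun n => c n * ((b n : ℝ) : ℂ) with hddef
  have hdn : ∀ n, ‖d n‖ = ‖c n‖ * b n := by
    intro n
    rw [hddef]
    dsimp only
    rw [norm_mul, Complex.norm_real, Real.norm_eq_abs, _root_.abs_of_nonneg (hbpos n).le]
  have hdb : ∀ n, ‖d n‖ ≤ ‖x‖ * b n := fun n => by
    rw [hdn]; exact mul_le_mul_of_nonneg_right (hcb n) (hbpos n).le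
  have hsum : ∀ s : ℝ, L < s → s < R → Summable (fun n : ℤ => b n * s ^ n) := by
    intro s hs1 hs2
    have hs0 : 0 < s := lt_of_le_of_lt hL0 hs1
    rw [summable_int_iff_summable_nat_and_neg]
    constructor
    · apply (summable_pow_div_of_lt_liminf hPpos hs0.le hPb hs2).congr
      intro k
      rw [zpow_natCast, hbnat, div_eq_mul_inv, mul_comm]
    · apply (summable_div_pow_of_limsup_lt hQpos hQb hs0 hs1).congr
      intro k
      rw [zpow_neg, zpow_natCast, hbneg, div_eq_mul_inv]
  have hbound : ∀ (z : ℂ) (n : ℤ), ‖d n * z ^ n‖ ≤ ‖x‖ * (b n * ‖z‖ ^ n) := by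
    intro z n
    rw [norm_mul, norm_zpow]
    calc ‖d n‖ * ‖z‖ ^ n ≤ (‖x‖ * b n) * ‖z‖ ^ n :=
          mul_le_mul_of_nonneg_right (hdb n) (zpow_nonneg (norm_nonneg z) n)
      _ = ‖x‖ * (b n * ‖z‖ ^ n) := by ring
  have hgsum : ∀ z ∈ A, Summable (fun n : ℤ => d n * z ^ n) := by
    intro z hz
    apply Summable.of_norm
    exact Summable.of_nonneg_of_le (fun n => norm_nonneg _) (fun n => hbound z n)
      ((hsum ‖z‖ hz.1 hz.2).mul_left ‖x‖)
  set g : ℂ → ℂ := fun z => ∑' n : ℤ, d n * z ^ n with hgdef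
  have hg_df : DifferentiableOn ℂ g A := by
    apply TendstoLocallyUniformlyOn.differentiableOn
      (F := fun (t : Finset ℤ) (z : ℂ) => ∑ n ∈ t, d n * z ^ n) (φ := atTop)
    · rw [tendstoLocallyUniformlyOn_iff_forall_isCompact hAopen]
      intro K hKA hK
      rcases K.eq_empty_or_nonempty with rfl | hKne
      · exact tendstoUniformlyOn_empty
      obtain ⟨z₁, hz₁K, hz₁⟩ := hK.exists_isMaxOn hKne continuous_norm.continuousOn
      obtain ⟨z₂, hz₂K, hz₂⟩ := hK.exists_isMinOn hKne continuous_norm.continuousOn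
      have hz₁A := hKA hz₁K
      have hz₂A := hKA hz₂K
      have hz₂pos : (0:ℝ) < ‖z₂‖ := lt_of_le_of_lt hL0 hz₂A.1
      have h21 : ‖z₂‖ ≤ ‖z₁‖ := hz₁ hz₂K
      apply tendstoUniformlyOn_tsum
        (u := fun n : ℤ => ‖x‖ * (b n * ‖z₁‖ ^ n) + ‖x‖ * (b n * ‖z₂‖ ^ n))
      · exact ((hsum ‖z₁‖ (lt_of_lt_of_le hz₂A.1 h21) hz₁A.2).mul_left ‖x‖).add
          ((hsum ‖z₂‖ hz₂A.1 (lt_of_le_of_lt h21 hz₁A.2)).mul_left ‖x‖)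
      · intro n z hzK
        rw [norm_mul, norm_zpow]
        have h1 : ‖z‖ ^ n ≤ ‖z₁‖ ^ n + ‖z₂‖ ^ n :=
          zpow_le_add hz₂pos (hz₂ hzK) (hz₁ hzK) n
        calc ‖d n‖ * ‖z‖ ^ n ≤ (‖x‖ * b n) * (‖z₁‖ ^ n + ‖z₂‖ ^ n) :=
              mul_le_mul (hdb n) h1 (zpow_nonneg (norm_nonneg z) n)
                (mul_nonneg (norm_nonneg x) (hbpos n).le)
          _ = ‖x‖ * (b n * ‖z₁‖ ^ n) + ‖x‖ * (b n * ‖z₂‖ ^ n) := by ring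
    · apply Filter.Eventually.of_forall
      intro t
      apply DifferentiableOn.fun_sum
      intro n _
      intro z hz
      exact ((differentiableAt_zpow.mpr (Or.inl (hAne z hz))).const_mul
        _).differentiableWithinAt
    · exact hAopen
  have hg_an : AnalyticOnNhd ℂ g A := hg_df.analyticOnNhd hAopen
  have hinj : ∀ u v : H, (∀ k : ℤ, (inner ℂ (e k) u : ℂ) = inner ℂ (e k) v) → u = v := by
    intro u v h
    apply e.repr.injective
    apply lp.ext
    funext k
    rw [e.repr_apply_apply, e.repr_apply_apply]
    exact h k
  rw [localSpectrum, Set.mem_compl_iff]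
  intro hres
  obtain ⟨U, hUo, hμU, f, hfan, hfx⟩ := hres
  have hμA : μ ∈ A := ⟨h₁', h₂'⟩
  have hadj : ∀ n : ℤ, ContinuousLinearMap.adjoint S (e n) = ((ω (n-1) : ℝ) : ℂ) • e (n-1) := by
    intro n
    apply hinj
    intro k
    rw [inner_smul_right]
    have h1 : (inner ℂ (e k) (ContinuousLinearMap.adjoint S (e n)) : ℂ)
        = starRingEnd ℂ (inner ℂ (ContinuousLinearMap.adjoint S (e n)) (e k)) :=
      (inner_conj_symm _ _).symm
    rw [h1, ContinuousLinearMap.adjoint_inner_left, hS k, inner_smul_right,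
      orthonormal_iff_ite.mp e.orthonormal, orthonormal_iff_ite.mp e.orthonormal]
    rcases eq_or_ne n (k+1) with rfl | hne
    · simp [Complex.conj_ofReal, add_sub_cancel_right]
    · have h2 : k ≠ n - 1 := by omega
      simp [hne, h2]
  have hrec : ∀ z ∈ U, ∀ n : ℤ,
      c n = ((ω (n-1) : ℝ) : ℂ) * inner ℂ (e (n-1)) (f z) - z * inner ℂ (e n) (f z) := by
    intro z hz n
    have hfz := hfx z hz
    have h0 : (inner ℂ (e n) x : ℂ) = inner ℂ (e n) ((S - z • (1 : H →L[ℂ] H)) (f z)) := by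
      rw [hfz]
    rw [hcdef]
    dsimp only
    rw [h0, ContinuousLinearMap.sub_apply, ContinuousLinearMap.smul_apply,
      ContinuousLinearMap.one_apply, inner_sub_right, inner_smul_right]
    congr 1
    rw [← ContinuousLinearMap.adjoint_inner_left, hadj n, inner_smul_left,
      Complex.conj_ofReal]
  have hgz : ∀ z ∈ U ∩ A, g z = 0 := by
    rintro z ⟨hzU, hzA⟩
    have hz0 : z ≠ 0 := hAne z hzA
    set F : ℤ → ℂ := fun n => inner ℂ (e n) (f z) * ((b n : ℝ) : ℂ) * z ^ (n + 1) with hFdef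
    have hterm : ∀ n : ℤ, d n * z ^ n = F (n - 1) - F n := by
      intro n
      rw [hFdef, hddef]
      dsimp only
      rw [hrec z hzU n]
      have hb' : ((b (n-1) : ℝ) : ℂ) = ((b n : ℝ) : ℂ) * ((ω (n-1) : ℝ) : ℂ) := by
        rw [← Complex.ofReal_mul]
        norm_cast
        have h5 := hbrec (n-1)
        rw [sub_add_cancel] at h5
        rw [← h5]
      have hzp1 : z ^ (n - 1 + 1) = z ^ n := by rw [sub_add_cancel]
      have hzpn : z ^ (n + 1) = z ^ n * z := zpow_add_one₀ hz0 n
      rw [hb', hzp1, hzpn]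
      ring
    have hkey : ∀ N : ℕ, ∑ n ∈ Finset.Icc (-(N:ℤ)) (N:ℤ), d n * z ^ n
        = F (-(N:ℤ) - 1) - F (N:ℤ) := by
      intro N
      rw [Finset.sum_congr rfl (fun n _ => hterm n)]
      exact sum_Icc_telescope F (by omega)
    have hfb : ∀ n : ℤ, ‖(inner ℂ (e n) (f z) : ℂ)‖ ≤ ‖f z‖ := by
      intro n
      calc ‖(inner ℂ (e n) (f z) : ℂ)‖ ≤ ‖e n‖ * ‖f z‖ := norm_inner_le_norm _ _
        _ = ‖f z‖ := by rw [e.orthonormal.1 n, one_mul]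
    have hz0' : ‖z‖ ≠ 0 := norm_ne_zero_iff.mpr hz0
    have hzpos : (0:ℝ) < ‖z‖ := lt_of_le_of_lt hL0 hzA.1
    have hFpos : Tendsto (fun N : ℕ => F (N:ℤ)) atTop (nhds 0) := by
      apply squeeze_zero_norm (a := fun N : ℕ => (‖f z‖ * ‖z‖) * (‖z‖ ^ N / P N))
      · intro N
        rw [hFdef]
        dsimp only
        rw [norm_mul, norm_mul, norm_zpow, Complex.norm_real, Real.norm_eq_abs,
          _root_.abs_of_nonneg (hbpos _).le, hbnat]
        have h1 : ‖z‖ ^ ((N:ℤ)+1) = ‖z‖ ^ (N:ℕ) * ‖z‖ := by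
          rw [zpow_add_one₀ hz0', zpow_natCast]
        rw [h1]
        calc ‖(inner ℂ (e (N:ℤ)) (f z) : ℂ)‖ * (P N)⁻¹ * (‖z‖ ^ (N:ℕ) * ‖z‖)
            ≤ ‖f z‖ * (P N)⁻¹ * (‖z‖ ^ (N:ℕ) * ‖z‖) :=
              mul_le_mul_of_nonneg_right (mul_le_mul_of_nonneg_right (hfb _)
                (inv_nonneg.mpr (hPpos N).le))
                (mul_nonneg (pow_nonneg (norm_nonneg z) N) (norm_nonneg z))
          _ = (‖f z‖ * ‖z‖) * (‖z‖ ^ N / P N) := by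
              rw [div_eq_mul_inv]
              ring
      · have hts := (summable_pow_div_of_lt_liminf hPpos hzpos.le hPb
          hzA.2).tendsto_atTop_zero
        have := hts.const_mul (‖f z‖ * ‖z‖)
        simpa using this
    have hFneg : Tendsto (fun N : ℕ => F (-(N:ℤ) - 1)) atTop (nhds 0) := by
      apply squeeze_zero_norm (a := fun N : ℕ => (‖f z‖ * ‖z‖) * (Q (N+1) / ‖z‖ ^ (N+1)))
      · intro N
        rw [hFdef]
        dsimp only
        have hb1 : b (-(N:ℤ) - 1) = Q (N+1) := by
          rw [show -(N:ℤ) - 1 = -((N+1 : ℕ) : ℤ) by push_cast; ring, hbneg]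
        have h1 : z ^ (-(N:ℤ) - 1 + 1) = ((z ^ (N:ℕ))⁻¹ : ℂ) := by
          rw [show -(N:ℤ) - 1 + 1 = -(N:ℤ) by ring, zpow_neg, zpow_natCast]
        rw [norm_mul, norm_mul, h1, hb1, Complex.norm_real, Real.norm_eq_abs,
          _root_.abs_of_nonneg (hQpos _).le, norm_inv, norm_pow]
        calc ‖(inner ℂ (e (-(N:ℤ) - 1)) (f z) : ℂ)‖ * Q (N+1) * (‖z‖ ^ (N:ℕ))⁻¹
            ≤ ‖f z‖ * Q (N+1) * (‖z‖ ^ (N:ℕ))⁻¹ :=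
              mul_le_mul_of_nonneg_right (mul_le_mul_of_nonneg_right (hfb _)
                (hQpos _).le) (inv_nonneg.mpr (pow_nonneg (norm_nonneg z) N))
          _ = ‖f z‖ * Q (N+1) * (‖z‖ ^ (N:ℕ))⁻¹ * (‖z‖ * ‖z‖⁻¹) := by
              rw [mul_inv_cancel₀ hz0', mul_one]
          _ = (‖f z‖ * ‖z‖) * (Q (N+1) / ‖z‖ ^ (N+1)) := by
              rw [pow_succ, div_eq_mul_inv, mul_inv]
              ring
      · have hts := (summable_div_pow_of_limsup_lt hQpos hQb hzpos
          hzA.1).tendsto_atTop_zero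
        have h2 := (hts.comp (tendsto_add_atTop_nat 1)).const_mul (‖f z‖ * ‖z‖)
        simpa [Function.comp] using h2
    have hIccT : Tendsto (fun N : ℕ => Finset.Icc (-(N:ℤ)) (N:ℤ)) atTop atTop := by
      apply Filter.tendsto_atTop_finset_of_monotone
      · intro a b hab
        apply Finset.Icc_subset_Icc <;> omega
      · intro n
        exact ⟨n.natAbs, by simp only [Finset.mem_Icc]; omega⟩
    have hT1 : Tendsto (fun N : ℕ => ∑ n ∈ Finset.Icc (-(N:ℤ)) (N:ℤ), d n * z ^ n)
        atTop (nhds (g z)) := (hgsum z hzA).hasSum.comp hIccT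
    have hT2 : Tendsto (fun N : ℕ => ∑ n ∈ Finset.Icc (-(N:ℤ)) (N:ℤ), d n * z ^ n)
        atTop (nhds 0) := by
      have hfe : (fun N : ℕ => ∑ n ∈ Finset.Icc (-(N:ℤ)) (N:ℤ), d n * z ^ n)
          = fun N : ℕ => F (-(N:ℤ) - 1) - F (N:ℤ) := funext hkey
      rw [hfe]
      simpa using hFneg.sub hFpos
    exact tendsto_nhds_unique hT1 hT2
  have hg0 : Set.EqOn g 0 A :=
    hg_an.eqOn_zero_of_preconnected_of_eventuallyEq_zero
      (by rw [hAdef]; exact isPreconnected_annulus hL0) hμA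
      (Filter.eventuallyEq_of_mem ((hUo.inter hAopen).mem_nhds ⟨hμU, hμA⟩)
        (fun z hz => hgz z hz))
  have hρpos : (0:ℝ) < ‖μ‖ := lt_of_le_of_lt hL0 h₁'
  have hd0 : ∀ m : ℤ, d m = 0 := by
    intro m
    set ρ : ℝ := ‖μ‖ with hρdef
    set w : ℝ → ℂ := fun θ => (ρ:ℂ) * Complex.exp ((θ:ℝ) * Complex.I) with hwdef
    have hwnorm : ∀ θ : ℝ, ‖w θ‖ = ρ := by
      intro θ
      rw [hwdef]
      dsimp only
      rw [norm_mul, Complex.norm_real, Real.norm_eq_abs, _root_.abs_of_nonneg hρpos.le,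
        Complex.norm_exp_ofReal_mul_I, mul_one]
    have hwA : ∀ θ : ℝ, w θ ∈ A := by
      intro θ
      constructor
      · rw [hwnorm]; exact h₁'
      · rw [hwnorm]; exact h₂'
    set G : ℤ → ℝ → ℂ :=
      fun n θ => d n * (w θ) ^ n * Complex.exp (-(m:ℂ) * θ * Complex.I) with hGdef
    have hGeq : ∀ (n : ℤ) (θ : ℝ), G n θ
        = d n * ((ρ:ℝ):ℂ) ^ n * Complex.exp (((n - m : ℤ):ℂ) * θ * Complex.I) := by
      intro n θ
      rw [hGdef, hwdef]
      dsimp only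
      have h3 : Complex.exp ((n:ℂ) * ((θ:ℝ) * Complex.I))
          * Complex.exp (-(m:ℂ) * θ * Complex.I)
          = Complex.exp (((n - m : ℤ):ℂ) * θ * Complex.I) := by
        rw [← Complex.exp_add]
        congr 1
        push_cast
        ring
      calc d n * (((ρ:ℝ):ℂ) * Complex.exp ((θ:ℝ) * Complex.I)) ^ n
            * Complex.exp (-(m:ℂ) * θ * Complex.I)
          = d n * ((ρ:ℝ):ℂ) ^ n * (Complex.exp ((θ:ℝ) * Complex.I) ^ n
            * Complex.exp (-(m:ℂ) * θ * Complex.I)) := by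
            rw [mul_zpow]
            ring
        _ = d n * ((ρ:ℝ):ℂ) ^ n
            * Complex.exp (((n - m : ℤ):ℂ) * θ * Complex.I) := by
            rw [← Complex.exp_int_mul, h3]
    have hexp1 : ∀ (k : ℤ) (θ : ℝ), ‖Complex.exp ((k:ℂ) * θ * Complex.I)‖ = 1 := by
      intro k θ
      rw [show ((k:ℂ) * θ * Complex.I) = (((k * θ : ℝ):ℂ) * Complex.I) by push_cast; ring,
        Complex.norm_exp_ofReal_mul_I]
    have hGnorm : ∀ (n : ℤ) (θ : ℝ), ‖G n θ‖ = ‖d n‖ * ρ ^ n := by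
      intro n θ
      rw [hGeq, norm_mul, norm_mul, norm_zpow, hexp1, mul_one, Complex.norm_real,
        Real.norm_eq_abs, _root_.abs_of_nonneg hρpos.le]
    have hGint : ∀ n : ℤ, MeasureTheory.Integrable (G n)
        (MeasureTheory.volume.restrict (Set.Ioc (0:ℝ) (2*Real.pi))) := by
      intro n
      apply Continuous.integrableOn_Ioc
      rw [show G n = fun θ : ℝ => d n * ((ρ:ℝ):ℂ) ^ n
        * Complex.exp (((n - m : ℤ):ℂ) * θ * Complex.I) from funext (hGeq n)]
      fun_prop
    have hGsummable : Summable (fun n : ℤ =>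
        ∫ θ in Set.Ioc (0:ℝ) (2*Real.pi), ‖G n θ‖) := by
      have h4 : ∀ n : ℤ, (∫ θ in Set.Ioc (0:ℝ) (2*Real.pi), ‖G n θ‖)
          = (2*Real.pi) * (‖d n‖ * ρ ^ n) := by
        intro n
        rw [show (fun θ : ℝ => ‖G n θ‖) = fun _ : ℝ => ‖d n‖ * ρ ^ n from
          funext (hGnorm n)]
        rw [MeasureTheory.setIntegral_const, MeasureTheory.measureReal_def, Real.volume_Ioc, smul_eq_mul]
        congr 1
        rw [ENNReal.toReal_ofReal (by linarith [Real.pi_pos])]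
        ring
      have h5 : Summable (fun n : ℤ => ‖d n‖ * ρ ^ n) := by
        apply Summable.of_nonneg_of_le
          (fun n => mul_nonneg (norm_nonneg _) (zpow_nonneg hρpos.le n))
          (fun n => ?_) ((hsum ρ h₁' h₂').mul_left ‖x‖)
        calc ‖d n‖ * ρ ^ n ≤ (‖x‖ * b n) * ρ ^ n :=
              mul_le_mul_of_nonneg_right (hdb n) (zpow_nonneg hρpos.le n)
          _ = ‖x‖ * (b n * ρ ^ n) := by ring
      exact (h5.mul_left (2*Real.pi)).congr (fun n => (h4 n).symm)
    have hswap := MeasureTheory.integral_tsum_of_summable_integral_norm hGint hGsummable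
    have hGzero : ∀ θ : ℝ, ∑' n : ℤ, G n θ = 0 := by
      intro θ
      have h1 : ∑' n : ℤ, G n θ
          = (∑' n : ℤ, d n * (w θ) ^ n) * Complex.exp (-(m:ℂ) * θ * Complex.I) :=
        tsum_mul_right
      have h2 : (∑' n : ℤ, d n * (w θ) ^ n) = g (w θ) := rfl
      rw [h1, h2, hg0 (hwA θ)]
      simp
    have hintzero : (∫ θ in Set.Ioc (0:ℝ) (2*Real.pi), ∑' n : ℤ, G n θ) = 0 := by
      simp only [hGzero]
      exact MeasureTheory.integral_zero _ _
    have h6 : ∀ n : ℤ, n ≠ m →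
        (∫ θ in Set.Ioc (0:ℝ) (2*Real.pi), G n θ) = 0 := by
      intro n hn
      rw [show (fun θ : ℝ => G n θ) = fun θ : ℝ => d n * ((ρ:ℝ):ℂ) ^ n
        * Complex.exp (((n - m : ℤ):ℂ) * θ * Complex.I) from funext (hGeq n)]
      rw [← intervalIntegral.integral_of_le (by positivity : (0:ℝ) ≤ 2*Real.pi)]
      rw [intervalIntegral.integral_const_mul, integral_exp_int (n - m) (by omega)]
      simp
    have h7 : (∫ θ in Set.Ioc (0:ℝ) (2*Real.pi), G m θ)
        = ((2*Real.pi : ℝ) : ℂ) * (d m * ((ρ:ℝ):ℂ) ^ m) := by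
      rw [show (fun θ : ℝ => G m θ) = fun _ : ℝ => d m * ((ρ:ℝ):ℂ) ^ m from ?_]
      · rw [MeasureTheory.setIntegral_const, MeasureTheory.measureReal_def, Real.volume_Ioc,
          ENNReal.toReal_ofReal (by linarith [Real.pi_pos])]
        rw [show ((2:ℝ)*Real.pi - 0) = 2*Real.pi by ring]
        rw [Complex.real_smul]
      · funext θ
        rw [hGeq]
        simp
    have h8 : (0:ℂ) = ((2*Real.pi : ℝ) : ℂ) * (d m * ((ρ:ℝ):ℂ) ^ m) := by
      rw [← h7, ← (tsum_eq_single (L := SummationFilter.unconditional ℤ) m h6), hswap, hintzero]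
    have hπ : ((2*Real.pi : ℝ) : ℂ) ≠ 0 := by
      simp [Real.pi_ne_zero]
    have hρz : (((ρ:ℝ):ℂ)) ^ m ≠ 0 := zpow_ne_zero m (by
      simp only [ne_eq, Complex.ofReal_eq_zero]
      exact hρpos.ne')
    have := h8.symm
    rcases mul_eq_zero.mp this with h | h
    · exact absurd h hπ
    · rcases mul_eq_zero.mp h with h' | h'
      · exact h'
      · exact absurd h' hρz
  have hc0 : ∀ k : ℤ, c k = 0 := by
    intro k
    have h := hd0 k
    rw [hddef] at h
    dsimp only at h
    rcases mul_eq_zero.mp h with h' | h'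
    · exact h'
    · exact absurd h' (by
        simp only [ne_eq, Complex.ofReal_eq_zero]
        exact (hbpos k).ne')
  apply hx
  apply hinj x 0
  intro k
  rw [inner_zero_right]
  exact hc0 k
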